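/- arXiv:1809.05416 — 5 statements merged into one kernel-verified Lean document; each statement's English description precedes it below -/
import Mathlib

section
/- Let p, q, t₁,…,t₈ ∈ ℂ∖{0} satisfy the balancing condition ∏_{j=1}^8 t_j = p²q², and suppose that every multiplicative relation among t₁,…,t₈, p, q is induced by the balancing condition, i.e., whenever β₁,…,β₈, m, n ∈ ℤ satisfy ∏_{j=1}^8 t_j^{β_j} = p^m q^n, there exists β ∈ ℤ with β₁ = ⋯ = β₈ = β and m = n = 2β. Let c ∈ ℂ∖{0} with c² = t₆·t₇, and set ε_j := q/(c·t_j) for j = 1,…,5, ε₆ := p⁴·c·t₈, and ε₇ := c/(q·t₈). Then whenever α₁,…,α₇, m, n ∈ ℤ satisfy ∏_{j=1}^7 ε_j^{α_j} = p^m q^n, there exists α ∈ ℤ such that α₁ = ⋯ = α₆ = α = n and m = α₇ = 2α. -/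
/-- **Lemma 3 of the paper.**  If every multiplicative relation among
`t₁, …, t₈, p, q` is induced by the balancing condition `∏ tⱼ = p² q²`, and the
parameters `ε₁, …, ε₇` are defined by the reparametrization
`εⱼ = q/(c tⱼ)` for `j = 1, …, 5`, `ε₆ = p⁴ c t₈`, `ε₇ = c/(q t₈)` with `c² = t₆ t₇`,
then every multiplicative relation `∏_{j=1}^7 εⱼ^{αⱼ} = pᵐ qⁿ` satisfies
`α₁ = ⋯ = α₆ = α = n` and `m = α₇ = 2α` for some `α ∈ ℤ`. -/
theorem elliptic_hypergeometric_multiplicative_relations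
    (p q t₁ t₂ t₃ t₄ t₅ t₆ t₇ t₈ c : ℂ)
    (hp : p ≠ 0) (hq : q ≠ 0)
    (ht₁ : t₁ ≠ 0) (ht₂ : t₂ ≠ 0) (ht₃ : t₃ ≠ 0) (ht₄ : t₄ ≠ 0)
    (ht₅ : t₅ ≠ 0) (ht₆ : t₆ ≠ 0) (ht₇ : t₇ ≠ 0) (ht₈ : t₈ ≠ 0)
    (hc : c ≠ 0)
    (hbal : t₁ * t₂ * t₃ * t₄ * t₅ * t₆ * t₇ * t₈ = p ^ 2 * q ^ 2)
    (hrel : ∀ β₁ β₂ β₃ β₄ β₅ β₆ β₇ β₈ m n : ℤ,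
      t₁ ^ β₁ * t₂ ^ β₂ * t₃ ^ β₃ * t₄ ^ β₄ * t₅ ^ β₅ * t₆ ^ β₆ * t₇ ^ β₇ * t₈ ^ β₈
        = p ^ m * q ^ n →
      ∃ β : ℤ, β₁ = β ∧ β₂ = β ∧ β₃ = β ∧ β₄ = β ∧ β₅ = β ∧ β₆ = β ∧ β₇ = β ∧ β₈ = β ∧
        m = 2 * β ∧ n = 2 * β)
    (hc2 : c ^ 2 = t₆ * t₇)
    (ε₁ ε₂ ε₃ ε₄ ε₅ ε₆ ε₇ : ℂ)
    (he₁ : ε₁ = q / (c * t₁)) (he₂ : ε₂ = q / (c * t₂)) (he₃ : ε₃ = q / (c * t₃))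
    (he₄ : ε₄ = q / (c * t₄)) (he₅ : ε₅ = q / (c * t₅))
    (he₆ : ε₆ = p ^ 4 * c * t₈) (he₇ : ε₇ = c / (q * t₈)) :
    ∀ α₁ α₂ α₃ α₄ α₅ α₆ α₇ m n : ℤ,
      ε₁ ^ α₁ * ε₂ ^ α₂ * ε₃ ^ α₃ * ε₄ ^ α₄ * ε₅ ^ α₅ * ε₆ ^ α₆ * ε₇ ^ α₇
        = p ^ m * q ^ n →
      ∃ α : ℤ, α₁ = α ∧ α₂ = α ∧ α₃ = α ∧ α₄ = α ∧ α₅ = α ∧ α₆ = α ∧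
        α = n ∧ m = 2 * α ∧ α₇ = 2 * α := by
  intro a1 a2 a3 a4 a5 a6 a7 m n h
  have hE1 : ε₁ ≠ 0 := he₁ ▸ div_ne_zero hq (mul_ne_zero hc ht₁)
  have hE2 : ε₂ ≠ 0 := he₂ ▸ div_ne_zero hq (mul_ne_zero hc ht₂)
  have hE3 : ε₃ ≠ 0 := he₃ ▸ div_ne_zero hq (mul_ne_zero hc ht₃)
  have hE4 : ε₄ ≠ 0 := he₄ ▸ div_ne_zero hq (mul_ne_zero hc ht₄)
  have hE5 : ε₅ ≠ 0 := he₅ ▸ div_ne_zero hq (mul_ne_zero hc ht₅)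
  have hE6 : ε₆ ≠ 0 := he₆ ▸ mul_ne_zero (mul_ne_zero (pow_ne_zero 4 hp) hc) ht₈
  have hE7 : ε₇ ≠ 0 := he₇ ▸ div_ne_zero hc (mul_ne_zero hq ht₈)
  set P : Additive ℂˣ := Additive.ofMul (Units.mk0 p hp) with hP
  set Q : Additive ℂˣ := Additive.ofMul (Units.mk0 q hq) with hQ
  set C : Additive ℂˣ := Additive.ofMul (Units.mk0 c hc) with hC0
  set T1 : Additive ℂˣ := Additive.ofMul (Units.mk0 t₁ ht₁) with hT1
  set T2 : Additive ℂˣ := Additive.ofMul (Units.mk0 t₂ ht₂) with hT2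
  set T3 : Additive ℂˣ := Additive.ofMul (Units.mk0 t₃ ht₃) with hT3
  set T4 : Additive ℂˣ := Additive.ofMul (Units.mk0 t₄ ht₄) with hT4
  set T5 : Additive ℂˣ := Additive.ofMul (Units.mk0 t₅ ht₅) with hT5
  set T6 : Additive ℂˣ := Additive.ofMul (Units.mk0 t₆ ht₆) with hT6
  set T7 : Additive ℂˣ := Additive.ofMul (Units.mk0 t₇ ht₇) with hT7
  set T8 : Additive ℂˣ := Additive.ofMul (Units.mk0 t₈ ht₈) with hT8
  set E1 : Additive ℂˣ := Additive.ofMul (Units.mk0 ε₁ hE1) with hEE1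
  set E2 : Additive ℂˣ := Additive.ofMul (Units.mk0 ε₂ hE2) with hEE2
  set E3 : Additive ℂˣ := Additive.ofMul (Units.mk0 ε₃ hE3) with hEE3
  set E4 : Additive ℂˣ := Additive.ofMul (Units.mk0 ε₄ hE4) with hEE4
  set E5 : Additive ℂˣ := Additive.ofMul (Units.mk0 ε₅ hE5) with hEE5
  set E6 : Additive ℂˣ := Additive.ofMul (Units.mk0 ε₆ hE6) with hEE6
  set E7 : Additive ℂˣ := Additive.ofMul (Units.mk0 ε₇ hE7) with hEE7
  have lift : ∀ (x y : ℂ) (hx : x ≠ 0) (hy : y ≠ 0), x = y →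
      Additive.ofMul (Units.mk0 x hx) = Additive.ofMul (Units.mk0 y hy) := by
    intro x y hx hy hxy; subst hxy; rfl
  have h1 : E1 = Q + (-C) + (-T1) := by
    have : Units.mk0 ε₁ hE1 = Units.mk0 q hq * (Units.mk0 c hc)⁻¹ * (Units.mk0 t₁ ht₁)⁻¹ :=
      Units.ext (by simp only [Units.val_mul, Units.val_inv_eq_inv_val, Units.val_mk0, he₁]; ring)
    simpa only [hEE1, hQ, hC0, hT1, ofMul_mul, ofMul_inv] using congrArg Additive.ofMul this
  have h2 : E2 = Q + (-C) + (-T2) := by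
    have : Units.mk0 ε₂ hE2 = Units.mk0 q hq * (Units.mk0 c hc)⁻¹ * (Units.mk0 t₂ ht₂)⁻¹ :=
      Units.ext (by simp only [Units.val_mul, Units.val_inv_eq_inv_val, Units.val_mk0, he₂]; ring)
    simpa only [hEE2, hQ, hC0, hT2, ofMul_mul, ofMul_inv] using congrArg Additive.ofMul this
  have h3 : E3 = Q + (-C) + (-T3) := by
    have : Units.mk0 ε₃ hE3 = Units.mk0 q hq * (Units.mk0 c hc)⁻¹ * (Units.mk0 t₃ ht₃)⁻¹ :=
      Units.ext (by simp only [Units.val_mul, Units.val_inv_eq_inv_val, Units.val_mk0, he₃]; ring)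
    simpa only [hEE3, hQ, hC0, hT3, ofMul_mul, ofMul_inv] using congrArg Additive.ofMul this
  have h4 : E4 = Q + (-C) + (-T4) := by
    have : Units.mk0 ε₄ hE4 = Units.mk0 q hq * (Units.mk0 c hc)⁻¹ * (Units.mk0 t₄ ht₄)⁻¹ :=
      Units.ext (by simp only [Units.val_mul, Units.val_inv_eq_inv_val, Units.val_mk0, he₄]; ring)
    simpa only [hEE4, hQ, hC0, hT4, ofMul_mul, ofMul_inv] using congrArg Additive.ofMul this
  have h5 : E5 = Q + (-C) + (-T5) := by
    have : Units.mk0 ε₅ hE5 = Units.mk0 q hq * (Units.mk0 c hc)⁻¹ * (Units.mk0 t₅ ht₅)⁻¹ :=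
      Units.ext (by simp only [Units.val_mul, Units.val_inv_eq_inv_val, Units.val_mk0, he₅]; ring)
    simpa only [hEE5, hQ, hC0, hT5, ofMul_mul, ofMul_inv] using congrArg Additive.ofMul this
  have h6 : E6 = (4 : ℤ) • P + C + T8 := by
    have hval : (Units.mk0 ε₆ hE6 : ℂ)
        = (((Units.mk0 p hp) ^ (4 : ℤ) * Units.mk0 c hc * Units.mk0 t₈ ht₈ : ℂˣ) : ℂ) := by
      simp only [Units.val_mul, Units.val_zpow_eq_zpow_val, Units.val_mk0, he₆]
      norm_num
    have : Units.mk0 ε₆ hE6 = (Units.mk0 p hp) ^ (4 : ℤ) * Units.mk0 c hc * Units.mk0 t₈ ht₈ :=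
      Units.ext hval
    simpa only [hEE6, hP, hC0, hT8, ofMul_mul, ofMul_zpow] using congrArg Additive.ofMul this
  have h7 : E7 = C + (-Q) + (-T8) := by
    have : Units.mk0 ε₇ hE7 = Units.mk0 c hc * (Units.mk0 q hq)⁻¹ * (Units.mk0 t₈ ht₈)⁻¹ :=
      Units.ext (by simp only [Units.val_mul, Units.val_inv_eq_inv_val, Units.val_mk0, he₇]; ring)
    simpa only [hEE7, hC0, hQ, hT8, ofMul_mul, ofMul_inv] using congrArg Additive.ofMul this
  have hCrel : (2 : ℤ) • C = T6 + T7 := by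
    have : Units.mk0 c hc ^ (2 : ℤ) = Units.mk0 t₆ ht₆ * Units.mk0 t₇ ht₇ :=
      Units.ext (by push_cast [Units.val_zpow_eq_zpow_val]; simpa using hc2)
    simpa only [hC0, hT6, hT7, ofMul_mul, ofMul_zpow] using congrArg Additive.ofMul this
  have ha : a1 • E1 + a2 • E2 + a3 • E3 + a4 • E4 + a5 • E5 + a6 • E6 + a7 • E7
      = m • P + n • Q := by
    have hu : Units.mk0 ε₁ hE1 ^ a1 * Units.mk0 ε₂ hE2 ^ a2 * Units.mk0 ε₃ hE3 ^ a3 *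
        Units.mk0 ε₄ hE4 ^ a4 * Units.mk0 ε₅ hE5 ^ a5 * Units.mk0 ε₆ hE6 ^ a6 *
        Units.mk0 ε₇ hE7 ^ a7 = Units.mk0 p hp ^ m * Units.mk0 q hq ^ n :=
      Units.ext (by push_cast [Units.val_zpow_eq_zpow_val]; exact h)
    simpa only [hEE1, hEE2, hEE3, hEE4, hEE5, hEE6, hEE7, hP, hQ, ofMul_mul, ofMul_zpow]
      using congrArg Additive.ofMul hu
  have key : (-(2*a1)) • T1 + (-(2*a2)) • T2 + (-(2*a3)) • T3 + (-(2*a4)) • T4 +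
      (-(2*a5)) • T5 + (a6 + a7 - (a1+a2+a3+a4+a5)) • T6 +
      (a6 + a7 - (a1+a2+a3+a4+a5)) • T7 + (2*(a6 - a7)) • T8
      = (2*m - 8*a6) • P + (2*n - 2*(a1+a2+a3+a4+a5) + 2*a7) • Q := by
    linear_combination (norm := module) (2 : ℤ) • ha - (2*a1) • h1 - (2*a2) • h2 -
      (2*a3) • h3 - (2*a4) • h4 - (2*a5) • h5 - (2*a6) • h6 - (2*a7) • h7 -
      (a6 + a7 - (a1+a2+a3+a4+a5)) • hCrel
  have keyu := congrArg Additive.toMul key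
  simp only [toMul_add, toMul_zsmul, hP, hQ, hT1, hT2, hT3, hT4, hT5, hT6, hT7, hT8,
    toMul_ofMul] at keyu
  have keyc := congrArg Units.val keyu
  push_cast [Units.val_zpow_eq_zpow_val] at keyc
  obtain ⟨β, hb1, hb2, hb3, hb4, hb5, hb6, hb7, hb8, hbm, hbn⟩ :=
    hrel (-(2*a1)) (-(2*a2)) (-(2*a3)) (-(2*a4)) (-(2*a5))
      (a6 + a7 - (a1+a2+a3+a4+a5)) (a6 + a7 - (a1+a2+a3+a4+a5)) (2*(a6 - a7))
      (2*m - 8*a6) (2*n - 2*(a1+a2+a3+a4+a5) + 2*a7) keyc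
  exact ⟨a1, rfl, by omega, by omega, by omega, by omega, by omega, by omega, by omega, by omega⟩
end

section
/- Let p, q, t₁,…,t₈ ∈ ℂ∖{0} satisfy ∏_{j=1}^8 t_j = p²q², and suppose every multiplicative relation among t₁,…,t₈, p, q is induced by this balancing condition (i.e., ∏_{j=1}^8 t_j^{β_j} = p^m q^n with integers β_j, m, n forces β₁ = ⋯ = β₈ = β and m = n = 2β for some β ∈ ℤ). Let c ∈ ℂ∖{0} with c² = t₆·t₇, set ε_j := q/(c·t_j) for j = 1,…,5, ε₆ := p⁴·c·t₈, ε₇ := c/(q·t₈), and ε₈ := q·ε₇ = c/t₈. Then whenever α₁,…,α₈, m, n ∈ ℤ satisfy ∏_{j=1}^8 ε_j^{α_j} = p^m q^n, there exists α ∈ ℤ with α₁ = ⋯ = α₆ = α = n − α₈ and α₇ + α₈ = 2α = m. -/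
/-- **Lemma 3 of the paper, together with the remark following it.**  If every
multiplicative relation among `t₁, …, t₈, p, q` is induced by the balancing condition
`∏ tⱼ = p² q²`, and the parameters `ε₁, …, ε₈` are given by the reparametrization
`εⱼ = q/(c tⱼ)` for `j = 1, …, 5`, `ε₆ = p⁴ c t₈`, `ε₇ = c/(q t₈)`, `ε₈ = q ε₇ = c/t₈`
with `c² = t₆ t₇`, then every multiplicative relation `∏_{j=1}^8 εⱼ^{αⱼ} = pᵐ qⁿ`
satisfies `α₁ = ⋯ = α₆ = α = n - α₈` and `α₇ + α₈ = 2α = m` for some `α ∈ ℤ`. -/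
theorem elliptic_hypergeometric_multiplicative_relations_caseB
    (p q t₁ t₂ t₃ t₄ t₅ t₆ t₇ t₈ c : ℂ)
    (hp : p ≠ 0) (hq : q ≠ 0)
    (ht₁ : t₁ ≠ 0) (ht₂ : t₂ ≠ 0) (ht₃ : t₃ ≠ 0) (ht₄ : t₄ ≠ 0)
    (ht₅ : t₅ ≠ 0) (ht₆ : t₆ ≠ 0) (ht₇ : t₇ ≠ 0) (ht₈ : t₈ ≠ 0)
    (hc : c ≠ 0)
    (hbal : t₁ * t₂ * t₃ * t₄ * t₅ * t₆ * t₇ * t₈ = p ^ 2 * q ^ 2)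
    (hrel : ∀ β₁ β₂ β₃ β₄ β₅ β₆ β₇ β₈ m n : ℤ,
      t₁ ^ β₁ * t₂ ^ β₂ * t₃ ^ β₃ * t₄ ^ β₄ * t₅ ^ β₅ * t₆ ^ β₆ * t₇ ^ β₇ * t₈ ^ β₈
        = p ^ m * q ^ n →
      ∃ β : ℤ, β₁ = β ∧ β₂ = β ∧ β₃ = β ∧ β₄ = β ∧ β₅ = β ∧ β₆ = β ∧ β₇ = β ∧ β₈ = β ∧
        m = 2 * β ∧ n = 2 * β)
    (hc2 : c ^ 2 = t₆ * t₇)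
    (ε₁ ε₂ ε₃ ε₄ ε₅ ε₆ ε₇ ε₈ : ℂ)
    (he₁ : ε₁ = q / (c * t₁)) (he₂ : ε₂ = q / (c * t₂)) (he₃ : ε₃ = q / (c * t₃))
    (he₄ : ε₄ = q / (c * t₄)) (he₅ : ε₅ = q / (c * t₅))
    (he₆ : ε₆ = p ^ 4 * c * t₈) (he₇ : ε₇ = c / (q * t₈))
    (he₈ : ε₈ = q * ε₇) (he₈' : ε₈ = c / t₈) :
    ∀ α₁ α₂ α₃ α₄ α₅ α₆ α₇ α₈ m n : ℤ,
      ε₁ ^ α₁ * ε₂ ^ α₂ * ε₃ ^ α₃ * ε₄ ^ α₄ * ε₅ ^ α₅ * ε₆ ^ α₆ * ε₇ ^ α₇ * ε₈ ^ α₈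
        = p ^ m * q ^ n →
      ∃ α : ℤ, α₁ = α ∧ α₂ = α ∧ α₃ = α ∧ α₄ = α ∧ α₅ = α ∧ α₆ = α ∧
        α = n - α₈ ∧ α₇ + α₈ = 2 * α ∧ m = 2 * α := by
  intro α₁ α₂ α₃ α₄ α₅ α₆ α₇ α₈ m n h
  subst he₁ he₂ he₃ he₄ he₅ he₆ he₇
  subst he₈'
  set P : ℂˣ := Units.mk0 p hp with hP
  set Q : ℂˣ := Units.mk0 q hq with hQ
  set C : ℂˣ := Units.mk0 c hc with hC
  set T₁ : ℂˣ := Units.mk0 t₁ ht₁ with hT₁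
  set T₂ : ℂˣ := Units.mk0 t₂ ht₂ with hT₂
  set T₃ : ℂˣ := Units.mk0 t₃ ht₃ with hT₃
  set T₄ : ℂˣ := Units.mk0 t₄ ht₄ with hT₄
  set T₅ : ℂˣ := Units.mk0 t₅ ht₅ with hT₅
  set T₆ : ℂˣ := Units.mk0 t₆ ht₆ with hT₆
  set T₇ : ℂˣ := Units.mk0 t₇ ht₇ with hT₇
  set T₈ : ℂˣ := Units.mk0 t₈ ht₈ with hT₈
  have hU : (Q/(C*T₁))^α₁ * (Q/(C*T₂))^α₂ * (Q/(C*T₃))^α₃ * (Q/(C*T₄))^α₄ *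
      (Q/(C*T₅))^α₅ * (P^(4:ℕ)*C*T₈)^α₆ * (C/(Q*T₈))^α₇ * (C/T₈)^α₈ = P^m * Q^n := by
    apply Units.ext
    simpa only [Units.val_mul, Units.val_div_eq_div_val, Units.val_zpow_eq_zpow_val,
      Units.val_pow_eq_pow_val, hP, hQ, hC, hT₁, hT₂, hT₃, hT₄, hT₅, hT₆, hT₇, hT₈, Units.val_mk0] using h
  have hc2U : C ^ (2:ℕ) = T₆ * T₇ := by
    apply Units.ext
    simpa only [Units.val_mul, Units.val_pow_eq_pow_val, hC, hT₆, hT₇, Units.val_mk0] using hc2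
  set K : ℤ := α₆ + α₇ + α₈ - (α₁ + α₂ + α₃ + α₄ + α₅) with hK
  have key : T₁ ^ (-(2*α₁)) * T₂ ^ (-(2*α₂)) * T₃ ^ (-(2*α₃)) * T₄ ^ (-(2*α₄)) *
      T₅ ^ (-(2*α₅)) * T₆ ^ K * T₇ ^ K * T₈ ^ (2*(α₆ - α₇ - α₈))
      = P ^ (2*m - 8*α₆) * Q ^ (2*n - 2*(α₁+α₂+α₃+α₄+α₅) + 2*α₇) := by
    apply Additive.ofMul.injective
    have hA := congrArg Additive.ofMul hU
    have hc2A := congrArg Additive.ofMul hc2U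
    simp only [ofMul_mul, ofMul_zpow, ofMul_div, ofMul_pow] at hA hc2A ⊢
    linear_combination (norm := module) (2:ℤ) • hA - K • hc2A
  have keyC : t₁ ^ (-(2*α₁)) * t₂ ^ (-(2*α₂)) * t₃ ^ (-(2*α₃)) * t₄ ^ (-(2*α₄)) *
      t₅ ^ (-(2*α₅)) * t₆ ^ K * t₇ ^ K * t₈ ^ (2*(α₆ - α₇ - α₈))
      = p ^ (2*m - 8*α₆) * q ^ (2*n - 2*(α₁+α₂+α₃+α₄+α₅) + 2*α₇) := by
    have := congrArg Units.val key
    simpa only [Units.val_mul, Units.val_zpow_eq_zpow_val, hP, hQ, hC, hT₁, hT₂, hT₃, hT₄, hT₅, hT₆, hT₇, hT₈, Units.val_mk0] using this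
  obtain ⟨β, h1, h2, h3, h4, h5, h6, h7, h8, h9, h10⟩ :=
    hrel _ _ _ _ _ _ _ _ _ _ keyC
  exact ⟨α₁, by omega, by omega, by omega, by omega, by omega, by omega, by omega, by omega,
    by omega⟩
end

section
/- Let p, q ∈ ℂ∖{0} with |p| < 1, |q| < 1, p^ℤ ∩ q^ℤ = {1}, and let ε₁,…,ε₈ ∈ ℂ∖{0} satisfy ∏_{j=1}^8 ε_j = p²q². Assume hypothesis (A) or hypothesis (B). Fix s, t ∈ ℂ with s² = q and t² = p. Then the 24 complex numbers q⁻¹ε_j and q⁻¹ε_j⁻¹ for j = 1,…,8, together with s⁻¹, −s⁻¹, s⁻¹t, −s⁻¹t, s⁻³, −s⁻³, s⁻³t, −s⁻³t, are pairwise distinct modulo p^ℤ (i.e., the ratio of any two distinct ones is not an integer power of p); moreover, for every nonzero integer ℓ, the number q^{ℓ−1}·ε₁ is not congruent modulo p^ℤ to any of these 24 numbers. -/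
/-- Hypothesis (A): every multiplicative relation among `ε₁, …, ε₈, p, q` is induced
by the balancing condition `∏ εⱼ = p² q²`. -/
def HypA (p q : ℂ) (ε : Fin 8 → ℂ) : Prop :=
  ∀ (α : Fin 8 → ℤ) (m n : ℤ), (∏ j, ε j ^ α j) = p ^ m * q ^ n →
    ∃ a : ℤ, (∀ j, α j = a) ∧ m = 2 * a ∧ n = 2 * a

/-- Hypothesis (B): `ε₈ = q ε₇` and every multiplicative relation among
`ε₁, …, ε₈, p, q` is induced by the special balancing condition. -/
def HypB (p q : ℂ) (ε : Fin 8 → ℂ) : Prop :=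
  ε 7 = q * ε 6 ∧
  ∀ (α : Fin 8 → ℤ) (m n : ℤ), (∏ j, ε j ^ α j) = p ^ m * q ^ n →
    ∃ a : ℤ, (∀ j : Fin 8, (j : ℕ) < 6 → α j = a) ∧ a = n - α 7 ∧
      α 6 + α 7 = 2 * a ∧ m = 2 * a

/-- The 24 numbers `q⁻¹ εⱼ`, `q⁻¹ εⱼ⁻¹` (`j = 1, …, 8`), `±s⁻¹`, `±s⁻¹ t`, `±s⁻³`,
`±s⁻³ t`, where `s² = q` and `t² = p`: possible zeros and poles of the coefficient `b`
of the elliptic hypergeometric equation. -/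
noncomputable def polesAndZeros (q s t : ℂ) (ε : Fin 8 → ℂ) : Fin 24 → ℂ :=
  fun i =>
    if h : (i : ℕ) < 8 then q⁻¹ * ε ⟨(i : ℕ), h⟩
    else if h2 : (i : ℕ) < 16 then q⁻¹ * (ε ⟨(i : ℕ) - 8, by omega⟩)⁻¹
    else
      ![s⁻¹, -s⁻¹, s⁻¹ * t, -(s⁻¹ * t), (s ^ 3)⁻¹, -(s ^ 3)⁻¹, (s ^ 3)⁻¹ * t,
        -((s ^ 3)⁻¹ * t)] ⟨(i : ℕ) - 16, by have := i.isLt; omega⟩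

/-! ### Auxiliary machinery -/

private def egSgn (b : Bool) : ℂ := if b then -1 else 1

private def egTab : Fin 8 → Bool × ℕ × ℕ :=
  ![(false,1,0),(true,1,0),(false,1,1),(true,1,1),(false,3,0),(true,3,0),(false,3,1),(true,3,1)]

private lemma egSgn_mul_self (b : Bool) : egSgn b * egSgn b = 1 := by
  cases b <;> norm_num [egSgn]

private lemma egSgn_inj {a b : Bool} (h : egSgn a = egSgn b) : a = b := by
  cases a <;> cases b <;> first | rfl | (exfalso; norm_num [egSgn] at h)

private lemma egTab_bounds : ∀ k : Fin 8,
    ((egTab k).2.1 = 1 ∨ (egTab k).2.1 = 3) ∧ ((egTab k).2.2 = 0 ∨ (egTab k).2.2 = 1) := by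
  decide

private lemma egTab_inj : Function.Injective egTab := by decide

private lemma eg_spec_val (s t : ℂ) (k : Fin 8) :
    ![s⁻¹, -s⁻¹, s⁻¹ * t, -(s⁻¹ * t), (s ^ 3)⁻¹, -(s ^ 3)⁻¹, (s ^ 3)⁻¹ * t,
      -((s ^ 3)⁻¹ * t)] k
      = egSgn (egTab k).1 * (s ^ (egTab k).2.1)⁻¹ * t ^ (egTab k).2.2 := by
  fin_cases k <;> norm_num [egSgn, egTab, Matrix.cons_val_zero, Matrix.cons_val_one,
    Matrix.head_cons, Matrix.cons_val_fin_one, Matrix.cons_val_succ]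

private lemma eg_prod_single (ε : Fin 8 → ℂ) (i : Fin 8) (c : ℤ) :
    (∏ j, ε j ^ (if j = i then c else 0)) = ε i ^ c := by
  rw [Finset.prod_eq_single i (fun b _ hb => by simp [hb]) (by simp)]
  simp

private lemma eg_exists_small (i j : Fin 8) : ∃ k : Fin 8, (k : ℕ) < 6 ∧ k ≠ i ∧ k ≠ j := by
  revert i j; decide

section core
variable {p q s t : ℂ} {ε : Fin 8 → ℂ}

private lemma eg_prod_two (hε : ∀ j, ε j ≠ 0) (i j : Fin 8) (c d : ℤ) :
    (∏ k, ε k ^ ((if k = i then c else 0) + (if k = j then d else 0)))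
      = ε i ^ c * ε j ^ d := by
  rw [Finset.prod_congr rfl (fun k _ => zpow_add₀ (hε k) _ _), Finset.prod_mul_distrib,
    eg_prod_single, eg_prod_single]

private lemma eg_key (hAB : HypA p q ε ∨ HypB p q ε)
    (α : Fin 8 → ℤ) (m n : ℤ) (h : (∏ j, ε j ^ α j) = p ^ m * q ^ n)
    (hA : ∀ a : ℤ, (∀ j, α j = a) → m = 2 * a → n = 2 * a → False)
    (hB : ∀ a : ℤ, (∀ j : Fin 8, (j : ℕ) < 6 → α j = a) → a = n - α 7 →
      α 6 + α 7 = 2 * a → m = 2 * a → False) : False := by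
  rcases hAB with h' | h'
  · obtain ⟨a, h1, h2, h3⟩ := h' α m n h; exact hA a h1 h2 h3
  · obtain ⟨a, h1, h2, h3, h4⟩ := h'.2 α m n h; exact hB a h1 h2 h3 h4

private lemma eg_fin67 {i j : Fin 8} (hij : i ≠ j) (hi : ¬ (i:ℕ) < 6) (hj : ¬ (j:ℕ) < 6) :
    (i = 6 ∧ j = 7) ∨ (i = 7 ∧ j = 6) := by
  have hih := i.isLt; have hjh := j.isLt
  have hne : (i:ℕ) ≠ (j:ℕ) := fun hh => hij (Fin.ext hh)
  have : ((i:ℕ) = 6 ∧ (j:ℕ) = 7) ∨ ((i:ℕ) = 7 ∧ (j:ℕ) = 6) := by omega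
  rcases this with ⟨h1, h2⟩ | ⟨h1, h2⟩
  · exact Or.inl ⟨by omega, by omega⟩
  · exact Or.inr ⟨by omega, by omega⟩

private lemma eg_L34 (hε : ∀ j, ε j ≠ 0) (hAB : HypA p q ε ∨ HypB p q ε)
    (i : Fin 8) (m n : ℤ) (h : ε i * ε i = p ^ m * q ^ n) : False := by
  refine eg_key hAB (fun k => (if k = i then 1 else 0) + (if k = i then 1 else 0)) m n ?_ ?_ ?_
  · rw [eg_prod_two hε, ← h]; simp
  · intro a ha _ _
    obtain ⟨k, hk6, hki, _⟩ := eg_exists_small i i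
    have h1 := ha i; have h2 := ha k
    simp [hki] at h1 h2; omega
  · intro a ha h2 h3 _
    obtain ⟨k, hk6, hki, _⟩ := eg_exists_small i i
    have hk := ha k hk6; simp [hki] at hk
    by_cases hi : (i:ℕ) < 6
    · have := ha i hi; simp at this; omega
    · have : (i:ℕ) = 6 ∨ (i:ℕ) = 7 := by have := i.isLt; omega
      rcases this with h6 | h7
      · have : i = 6 := by omega
        subst this; simp at h2 h3; omega
      · have : i = 7 := by omega
        subst this; simp at h2 h3; omega

private lemma eg_L1 (hε : ∀ j, ε j ≠ 0) (hAB : HypA p q ε ∨ HypB p q ε)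
    (i j : Fin 8) (hij : i ≠ j) (m n : ℤ)
    (hside : n = 0 ∨ (i:ℕ) < 6 ∨ (j:ℕ) < 6)
    (h : ε i = ε j * (p ^ m * q ^ n)) : False := by
  refine eg_key hAB (fun k => (if k = i then 1 else 0) + (if k = j then (-1) else 0)) m n ?_ ?_ ?_
  · rw [eg_prod_two hε]
    field_simp [hε j] at h ⊢
    rw [h]
  · intro a ha _ _
    have h1 := ha i; have h2 := ha j
    simp [hij, Ne.symm hij] at h1 h2; omega
  · intro a ha h2 h3 _
    obtain ⟨k, hk6, hki, hkj⟩ := eg_exists_small i j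
    have hk := ha k hk6; simp [hki, hkj] at hk
    by_cases hi : (i:ℕ) < 6
    · have := ha i hi; simp [hij] at this; omega
    by_cases hj : (j:ℕ) < 6
    · have := ha j hj; simp [Ne.symm hij] at this; omega
    have hn : n = 0 := by tauto
    rcases eg_fin67 hij hi hj with ⟨h6, h7⟩ | ⟨h6, h7⟩ <;> subst h6 <;> subst h7 <;>
      simp at h2 h3 <;> omega

private lemma eg_L2 (hε : ∀ j, ε j ≠ 0) (hAB : HypA p q ε ∨ HypB p q ε)
    (i j : Fin 8) (hij : i ≠ j) (m n : ℤ)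
    (h : ε i * ε j = p ^ m * q ^ n) : False := by
  refine eg_key hAB (fun k => (if k = i then 1 else 0) + (if k = j then 1 else 0)) m n ?_ ?_ ?_
  · rw [eg_prod_two hε, ← h]; simp
  · intro a ha _ _
    obtain ⟨k, hk6, hki, hkj⟩ := eg_exists_small i j
    have h1 := ha i; have h2 := ha k
    simp [hij, hki, hkj] at h1 h2; omega
  · intro a ha h2 h3 _
    obtain ⟨k, hk6, hki, hkj⟩ := eg_exists_small i j
    have hk := ha k hk6; simp [hki, hkj] at hk
    by_cases hi : (i:ℕ) < 6
    · have := ha i hi; simp [hij] at this; omega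
    by_cases hj : (j:ℕ) < 6
    · have := ha j hj; simp [Ne.symm hij] at this; omega
    rcases eg_fin67 hij hi hj with ⟨h6, h7⟩ | ⟨h6, h7⟩ <;> subst h6 <;> subst h7 <;>
      simp at h3 <;> omega

private lemma eg_sq_spec (hp0 : p ≠ 0) (hq0 : q ≠ 0) (hs : s ^ 2 = q) (ht : t ^ 2 = p)
    (y : ℂ) (σ : Bool) (c b : ℕ) (w ℓ : ℤ)
    (h : q ^ w * y = egSgn σ * (s ^ c)⁻¹ * t ^ b * p ^ ℓ) :
    y * y = p ^ (2 * ℓ + (b : ℤ)) * q ^ (-(c : ℤ) - 2 * w) := by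
  have hqw : q ^ w ≠ 0 := zpow_ne_zero _ hq0
  have hss : s ^ c * s ^ c = q ^ c := by rw [← pow_add, ← two_mul, pow_mul, hs]
  have htt : t ^ b * t ^ b = p ^ b := by rw [← pow_add, ← two_mul, pow_mul, ht]
  have hqc : (q : ℂ) ^ c ≠ 0 := pow_ne_zero _ hq0
  have e1 : (q ^ w * y) * (q ^ w * y) = (q ^ c)⁻¹ * p ^ b * (p ^ ℓ * p ^ ℓ) := by
    rw [h]
    have expand : (egSgn σ * (s ^ c)⁻¹ * t ^ b * p ^ ℓ) * (egSgn σ * (s ^ c)⁻¹ * t ^ b * p ^ ℓ)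
        = (egSgn σ * egSgn σ) * ((s ^ c) * (s ^ c))⁻¹ * ((t ^ b) * (t ^ b)) * (p ^ ℓ * p ^ ℓ) := by
      ring
    rw [expand, egSgn_mul_self, hss, htt]
    rw [one_mul]
  have e3 : p ^ (2 * ℓ + (b : ℤ)) * q ^ (-(c : ℤ) - 2 * w)
      = ((q ^ c)⁻¹ * p ^ b * (p ^ ℓ * p ^ ℓ)) * (q ^ w * q ^ w)⁻¹ := by
    rw [zpow_add₀ hp0, zpow_sub₀ hq0, zpow_neg, zpow_natCast, zpow_natCast, two_mul,
      zpow_add₀ hp0, two_mul, zpow_add₀ hq0]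
    field_simp
  rw [e3]
  field_simp at e1 ⊢
  linear_combination e1

private lemma eg_pq_eq (hp0 : p ≠ 0) (hq0 : q ≠ 0)
    (hpq : ∀ m n : ℤ, p ^ m = q ^ n → m = 0 ∧ n = 0)
    (A B A' B' : ℤ) (h : q ^ A * p ^ B = q ^ A' * p ^ B') : A = A' ∧ B = B' := by
  have h2 : p ^ (B - B') = q ^ (A' - A) := by
    rw [zpow_sub₀ hp0, zpow_sub₀ hq0,
      div_eq_div_iff (zpow_ne_zero _ hp0) (zpow_ne_zero _ hq0)]
    linear_combination h
  obtain ⟨h3, h4⟩ := hpq _ _ h2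
  omega

private lemma eg_Lspec (hp0 : p ≠ 0) (hq0 : q ≠ 0)
    (hpq : ∀ m n : ℤ, p ^ m = q ^ n → m = 0 ∧ n = 0)
    (hs : s ^ 2 = q) (ht : t ^ 2 = p) (hs0 : s ≠ 0) (ht0 : t ≠ 0)
    (k k' : Fin 8) (ℓ : ℤ)
    (h : egSgn (egTab k).1 * (s ^ (egTab k).2.1)⁻¹ * t ^ (egTab k).2.2
       = egSgn (egTab k').1 * (s ^ (egTab k').2.1)⁻¹ * t ^ (egTab k').2.2 * p ^ ℓ) :
    k = k' := by
  obtain ⟨hc, hb⟩ := egTab_bounds k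
  obtain ⟨hc', hb'⟩ := egTab_bounds k'
  set σ := (egTab k).1 with hσdef
  set c := (egTab k).2.1 with hcdef
  set b := (egTab k).2.2 with hbdef
  set σ' := (egTab k').1
  set c' := (egTab k').2.1
  set b' := (egTab k').2.2
  set y : ℂ := egSgn σ * (s ^ c)⁻¹ * t ^ b with hy
  have hss : s ^ c * s ^ c = q ^ c := by rw [← pow_add, ← two_mul, pow_mul, hs]
  have htt : t ^ b * t ^ b = p ^ b := by rw [← pow_add, ← two_mul, pow_mul, ht]
  have hyy : y * y = (q ^ c)⁻¹ * p ^ b := by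
    rw [hy]
    have expand : (egSgn σ * (s ^ c)⁻¹ * t ^ b) * (egSgn σ * (s ^ c)⁻¹ * t ^ b)
        = (egSgn σ * egSgn σ) * ((s ^ c) * (s ^ c))⁻¹ * ((t ^ b) * (t ^ b)) := by ring
    rw [expand, egSgn_mul_self, hss, htt, one_mul]
  have e0 := eg_sq_spec hp0 hq0 hs ht y σ' c' b' 0 ℓ (by rw [zpow_zero, one_mul]; exact h)
  have e2 : q ^ (-(c : ℤ)) * p ^ ((b : ℤ)) = q ^ (-(c' : ℤ) - 2 * 0) * p ^ (2 * ℓ + (b' : ℤ)) :=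
    calc q ^ (-(c : ℤ)) * p ^ ((b : ℤ)) = (q ^ c)⁻¹ * p ^ b := by
          rw [zpow_neg, zpow_natCast, zpow_natCast]
      _ = y * y := hyy.symm
      _ = p ^ (2 * ℓ + (b' : ℤ)) * q ^ (-(c' : ℤ) - 2 * 0) := e0
      _ = q ^ (-(c' : ℤ) - 2 * 0) * p ^ (2 * ℓ + (b' : ℤ)) := mul_comm _ _
  obtain ⟨hA, hB⟩ := eg_pq_eq hp0 hq0 hpq _ _ _ _ e2
  have hcc : c = c' := by omega
  have hbb : b = b' := by omega
  have hl0 : ℓ = 0 := by omega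
  have hX : (s ^ c)⁻¹ * t ^ b ≠ 0 :=
    mul_ne_zero (inv_ne_zero (pow_ne_zero _ hs0)) (pow_ne_zero _ ht0)
  have hσσ : egSgn σ = egSgn σ' := by
    have h' : egSgn σ * ((s ^ c)⁻¹ * t ^ b) = egSgn σ' * ((s ^ c)⁻¹ * t ^ b) := by
      rw [hl0, zpow_zero, mul_one] at h
      rw [← hcc, ← hbb] at h
      linear_combination h
    exact mul_right_cancel₀ hX h'
  apply egTab_inj
  have hσ : σ = σ' := egSgn_inj hσσ
  ext1
  · exact hσ
  · exact Prod.ext hcc hbb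

private lemma eg_flip (hp0 : p ≠ 0) {x y : ℂ} {ℓ : ℤ} (h : x = y * p ^ ℓ) :
    y = x * p ^ (-ℓ) := by
  rw [h, zpow_neg, mul_assoc, mul_inv_cancel₀ (zpow_ne_zero _ hp0), mul_one]

private lemma eg_case_ss (hq0 : q ≠ 0) (hε : ∀ j, ε j ≠ 0)
    (hAB : HypA p q ε ∨ HypB p q ε) (a b : Fin 8) (hab : a ≠ b) (ℓ : ℤ)
    (h : q⁻¹ * ε a = q⁻¹ * ε b * p ^ ℓ) : False := by
  refine eg_L1 hε hAB a b hab ℓ 0 (Or.inl rfl) ?_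
  rw [zpow_zero, mul_one]
  field_simp at h ⊢
  linear_combination h

private lemma eg_case_sm (hq0 : q ≠ 0) (hε : ∀ j, ε j ≠ 0)
    (hAB : HypA p q ε ∨ HypB p q ε) (a b : Fin 8) (ℓ : ℤ)
    (h : q⁻¹ * ε a = q⁻¹ * (ε b)⁻¹ * p ^ ℓ) : False := by
  have key : ε a * ε b = p ^ ℓ * q ^ (0 : ℤ) := by
    rw [zpow_zero, mul_one]
    field_simp [hε b] at h
    refine mul_left_cancel₀ hq0 ?_
    linear_combination q * h
  by_cases hab : a = b
  · subst hab; exact eg_L34 hε hAB a ℓ 0 key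
  · exact eg_L2 hε hAB a b hab ℓ 0 key

private lemma eg_case_mm (hq0 : q ≠ 0) (hε : ∀ j, ε j ≠ 0)
    (hAB : HypA p q ε ∨ HypB p q ε) (a b : Fin 8) (hab : a ≠ b) (ℓ : ℤ)
    (h : q⁻¹ * (ε a)⁻¹ = q⁻¹ * (ε b)⁻¹ * p ^ ℓ) : False := by
  refine eg_L1 hε hAB b a (Ne.symm hab) ℓ 0 (Or.inl rfl) ?_
  rw [zpow_zero, mul_one]
  field_simp [hε a, hε b] at h
  refine mul_left_cancel₀ hq0 ?_
  linear_combination q * h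

private lemma eg_case_sspec (hp0 : p ≠ 0) (hq0 : q ≠ 0) (hε : ∀ j, ε j ≠ 0)
    (hAB : HypA p q ε ∨ HypB p q ε) (hs : s ^ 2 = q) (ht : t ^ 2 = p)
    (a : Fin 8) (k : Fin 8) (ℓ : ℤ)
    (h : q⁻¹ * ε a = egSgn (egTab k).1 * (s ^ (egTab k).2.1)⁻¹ * t ^ (egTab k).2.2 * p ^ ℓ) :
    False := by
  have h' : q ^ (-1 : ℤ) * ε a
      = egSgn (egTab k).1 * (s ^ (egTab k).2.1)⁻¹ * t ^ (egTab k).2.2 * p ^ ℓ := by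
    rw [zpow_neg_one]; exact h
  exact eg_L34 hε hAB a _ _ (eg_sq_spec hp0 hq0 hs ht (ε a) _ _ _ _ _ h')

private lemma eg_case_mspec (hp0 : p ≠ 0) (hq0 : q ≠ 0) (hε : ∀ j, ε j ≠ 0)
    (hAB : HypA p q ε ∨ HypB p q ε) (hs : s ^ 2 = q) (ht : t ^ 2 = p)
    (a : Fin 8) (k : Fin 8) (ℓ : ℤ)
    (h : q⁻¹ * (ε a)⁻¹
      = egSgn (egTab k).1 * (s ^ (egTab k).2.1)⁻¹ * t ^ (egTab k).2.2 * p ^ ℓ) :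
    False := by
  have h' : q ^ (-1 : ℤ) * (ε a)⁻¹
      = egSgn (egTab k).1 * (s ^ (egTab k).2.1)⁻¹ * t ^ (egTab k).2.2 * p ^ ℓ := by
    rw [zpow_neg_one]; exact h
  have e := eg_sq_spec hp0 hq0 hs ht ((ε a)⁻¹) _ _ _ _ _ h'
  refine eg_L34 hε hAB a (-(2 * ℓ + ((egTab k).2.2 : ℤ)))
    (-(-((egTab k).2.1 : ℤ) - 2 * (-1))) ?_
  rw [zpow_neg, zpow_neg, ← mul_inv, ← e, mul_inv, inv_inv]

end core

/-- Under hypothesis (A) or (B), the 24 numbers `q⁻¹ εⱼ^{±1}`, `±s⁻¹`, `±s⁻¹ t`,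
`±s⁻³`, `±s⁻³ t` are pairwise distinct modulo `p^ℤ`, and for every nonzero integer
`ℓ`, the number `q^{ℓ-1} ε₁` is not congruent modulo `p^ℤ` to any of them. -/
theorem elliptic_hypergeometric_poles_distinct
    (p q : ℂ) (ε : Fin 8 → ℂ)
    (hp0 : p ≠ 0) (hp1 : ‖p‖ < 1)
    (hq0 : q ≠ 0) (hq1 : ‖q‖ < 1)
    (hpq : ∀ m n : ℤ, p ^ m = q ^ n → m = 0 ∧ n = 0)
    (hε : ∀ j, ε j ≠ 0)
    (hbal : (∏ j, ε j) = p ^ 2 * q ^ 2)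
    (hAB : HypA p q ε ∨ HypB p q ε)
    (s t : ℂ) (hs : s ^ 2 = q) (ht : t ^ 2 = p) :
    (∀ i j : Fin 24, i ≠ j → ∀ ℓ : ℤ,
      polesAndZeros q s t ε i ≠ polesAndZeros q s t ε j * p ^ ℓ) ∧
    (∀ ℓ : ℤ, ℓ ≠ 0 → ∀ (i : Fin 24) (n : ℤ),
      q ^ (ℓ - 1) * ε 0 ≠ polesAndZeros q s t ε i * p ^ n) := by
  have hs0 : s ≠ 0 := fun h => hq0 (by rw [← hs, h]; ring)
  have ht0 : t ≠ 0 := fun h => hp0 (by rw [← ht, h]; ring)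
  have pzcases : ∀ i : Fin 24,
      (∃ a : Fin 8, polesAndZeros q s t ε i = q⁻¹ * ε a ∧ (i : ℕ) = (a : ℕ)) ∨
      (∃ a : Fin 8, polesAndZeros q s t ε i = q⁻¹ * (ε a)⁻¹ ∧ (i : ℕ) = (a : ℕ) + 8) ∨
      (∃ k : Fin 8, polesAndZeros q s t ε i
          = egSgn (egTab k).1 * (s ^ (egTab k).2.1)⁻¹ * t ^ (egTab k).2.2 ∧
          (i : ℕ) = (k : ℕ) + 16) := by
    intro i
    by_cases h : (i : ℕ) < 8
    · exact Or.inl ⟨⟨(i : ℕ), h⟩, by simp [polesAndZeros, h], rfl⟩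
    · by_cases h2 : (i : ℕ) < 16
      · refine Or.inr (Or.inl ⟨⟨(i : ℕ) - 8, by omega⟩, ?_, by simp; omega⟩)
        simp [polesAndZeros, h, h2]
      · refine Or.inr (Or.inr ⟨⟨(i : ℕ) - 16, by have := i.isLt; omega⟩, ?_, by simp; omega⟩)
        simp only [polesAndZeros, dif_neg h, dif_neg h2]
        exact eg_spec_val s t _
  constructor
  · intro i j hij ℓ heq
    rcases pzcases i with ⟨a, hai, hia⟩ | ⟨a, hai, hia⟩ | ⟨k, hai, hia⟩ <;>
      rcases pzcases j with ⟨b, hbj, hjb⟩ | ⟨b, hbj, hjb⟩ | ⟨k', hbj, hjb⟩ <;>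
      rw [hai, hbj] at heq
    · refine eg_case_ss hq0 hε hAB a b ?_ ℓ heq
      intro hh; apply hij
      have := congrArg Fin.val hh; omega
    · exact eg_case_sm hq0 hε hAB a b ℓ heq
    · exact eg_case_sspec hp0 hq0 hε hAB hs ht a k' ℓ heq
    · exact eg_case_sm hq0 hε hAB b a (-ℓ) (eg_flip hp0 heq)
    · refine eg_case_mm hq0 hε hAB a b ?_ ℓ heq
      intro hh; apply hij
      have := congrArg Fin.val hh; omega
    · exact eg_case_mspec hp0 hq0 hε hAB hs ht a k' ℓ heq
    · exact eg_case_sspec hp0 hq0 hε hAB hs ht b k (-ℓ) (eg_flip hp0 heq)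
    · exact eg_case_mspec hp0 hq0 hε hAB hs ht b k (-ℓ) (eg_flip hp0 heq)
    · have hkk := eg_Lspec hp0 hq0 hpq hs ht hs0 ht0 k k' ℓ heq
      apply hij
      have := congrArg Fin.val hkk; omega
  · intro ℓ hℓ0 i n heq
    rcases pzcases i with ⟨a, hai, hia⟩ | ⟨a, hai, hia⟩ | ⟨k, hai, hia⟩ <;> rw [hai] at heq
    · by_cases ha0 : a = 0
      · subst ha0
        have e : p ^ n = q ^ ℓ := by
          rw [zpow_sub₀ hq0, zpow_one] at heq
          field_simp [hε 0] at heq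
          refine mul_left_cancel₀ (hε 0) ?_
          linear_combination -(ε 0) * heq
        obtain ⟨hn, hl⟩ := hpq n ℓ e
        exact hℓ0 hl
      · refine eg_L1 hε hAB 0 a (fun hh => ha0 hh.symm) n (-ℓ)
          (Or.inr (Or.inl (by decide))) ?_
        rw [zpow_sub₀ hq0, zpow_one] at heq
        rw [zpow_neg]
        have hql : q ^ ℓ ≠ 0 := zpow_ne_zero _ hq0
        field_simp [hε a, hε 0, hql] at heq ⊢
        linear_combination heq
    · have key : ε 0 * ε a = p ^ n * q ^ (-ℓ) := by
        rw [zpow_sub₀ hq0, zpow_one] at heq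
        rw [zpow_neg]
        have hql : q ^ ℓ ≠ 0 := zpow_ne_zero _ hq0
        field_simp [hε a, hε 0, hql] at heq ⊢
        refine mul_left_cancel₀ hq0 ?_
        linear_combination q * heq
      by_cases ha0 : a = 0
      · subst ha0; exact eg_L34 hε hAB 0 n (-ℓ) key
      · exact eg_L2 hε hAB 0 a (fun hh => ha0 hh.symm) n (-ℓ) key
    · exact eg_L34 hε hAB 0 _ _ (eg_sq_spec hp0 hq0 hs ht (ε 0) _ _ _ (ℓ - 1) n heq)
end

section
/- Let p ∈ ℂ with 0 < |p| < 1. Then the function z ↦ θ(z;p) is analytic on ℂ∖{0}; it vanishes at z ∈ ℂ∖{0} if and only if z = p^n for some n ∈ ℤ; and each such zero is simple, i.e., the order of vanishing of θ(·;p) at each point p^n (n ∈ ℤ) equals 1. -/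
/-- The infinite `p`-Pochhammer product `(z;p)_∞ = ∏_{j ≥ 0} (1 - z pʲ)`. -/
noncomputable def poch (p z : ℂ) : ℂ := ∏' j : ℕ, (1 - z * p ^ j)

/-- The theta function `θ(z;p) = (z;p)_∞ (p z⁻¹;p)_∞`. -/
noncomputable def theta (p z : ℂ) : ℂ := poch p z * poch p (p * z⁻¹)

open Complex Metric Finset Filter

namespace ThetaAux

/-- The logarithm of the tail of the Pochhammer product. -/
noncomputable def tlog (p : ℂ) (N : ℕ) (z : ℂ) : ℂ :=
  ∑' j : ℕ, Complex.log (1 - z * p ^ (j + N))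

variable {p : ℂ}

lemma norm_factor_le (hp1 : ‖p‖ < 1) {R : ℝ} {N : ℕ}
    (hRN : R * ‖p‖ ^ N ≤ 1 / 2) {z : ℂ} (hz : z ∈ ball (0 : ℂ) R) (j : ℕ) :
    ‖z * p ^ (j + N)‖ ≤ (1 / 2) * ‖p‖ ^ j := by
  have hz' : ‖z‖ < R := mem_ball_zero_iff.mp hz
  have hq : (0 : ℝ) ≤ ‖p‖ := norm_nonneg p
  have h1 : ‖z * p ^ (j + N)‖ = ‖z‖ * (‖p‖ ^ N * ‖p‖ ^ j) := by
    rw [norm_mul, norm_pow, pow_add]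
    ring
  rw [h1]
  calc ‖z‖ * (‖p‖ ^ N * ‖p‖ ^ j)
      ≤ R * (‖p‖ ^ N * ‖p‖ ^ j) := by
        apply mul_le_mul_of_nonneg_right hz'.le (by positivity)
    _ = (R * ‖p‖ ^ N) * ‖p‖ ^ j := by ring
    _ ≤ (1 / 2) * ‖p‖ ^ j := by
        apply mul_le_mul_of_nonneg_right hRN (by positivity)

lemma norm_factor_le_half (hp1 : ‖p‖ < 1) {R : ℝ} {N : ℕ}
    (hRN : R * ‖p‖ ^ N ≤ 1 / 2) {z : ℂ} (hz : z ∈ ball (0 : ℂ) R) (j : ℕ) :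
    ‖z * p ^ (j + N)‖ ≤ 1 / 2 := by
  refine (norm_factor_le hp1 hRN hz j).trans ?_
  have : ‖p‖ ^ j ≤ 1 := pow_le_one₀ (norm_nonneg p) hp1.le
  nlinarith

lemma factor_ne_zero {w : ℂ} (hw : ‖w‖ ≤ 1 / 2) : 1 - w ≠ 0 := by
  intro h
  have : w = 1 := by linear_combination -h
  rw [this] at hw
  norm_num at hw

lemma factor_mem_slitPlane {w : ℂ} (hw : ‖w‖ ≤ 1 / 2) : 1 - w ∈ Complex.slitPlane := by
  rw [Complex.mem_slitPlane_iff]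
  left
  have h1 : |w.re| ≤ ‖w‖ := Complex.abs_re_le_norm w
  have : (1 - w).re = 1 - w.re := by simp
  rw [this]
  have : w.re ≤ 1 / 2 := le_trans (le_abs_self _) (h1.trans hw)
  linarith

lemma log_norm_le (hp1 : ‖p‖ < 1) {R : ℝ} {N : ℕ}
    (hRN : R * ‖p‖ ^ N ≤ 1 / 2) {z : ℂ} (hz : z ∈ ball (0 : ℂ) R) (j : ℕ) :
    ‖Complex.log (1 - z * p ^ (j + N))‖ ≤ (3 / 4) * ‖p‖ ^ j := by
  have h1 : ‖-(z * p ^ (j + N))‖ ≤ 1 / 2 := by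
    rw [norm_neg]; exact norm_factor_le_half hp1 hRN hz j
  have h2 := Complex.norm_log_one_add_half_le_self h1
  rw [show (1 : ℂ) + -(z * p ^ (j + N)) = 1 - z * p ^ (j + N) by ring] at h2
  rw [norm_neg] at h2
  refine h2.trans ?_
  have h3 := norm_factor_le hp1 hRN hz j
  nlinarith [norm_nonneg (z * p ^ (j + N))]

lemma summable_u (hp1 : ‖p‖ < 1) (c : ℝ) :
    Summable (fun j : ℕ => c * ‖p‖ ^ j) :=
  (summable_geometric_of_lt_one (norm_nonneg p) hp1).mul_left c

lemma summable_log (hp1 : ‖p‖ < 1) {R : ℝ} {N : ℕ}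
    (hRN : R * ‖p‖ ^ N ≤ 1 / 2) {z : ℂ} (hz : z ∈ ball (0 : ℂ) R) :
    Summable (fun j : ℕ => Complex.log (1 - z * p ^ (j + N))) := by
  apply Summable.of_norm
  exact Summable.of_nonneg_of_le (fun j => norm_nonneg _)
    (fun j => log_norm_le hp1 hRN hz j) (summable_u hp1 (3 / 4))

lemma tlog_diffOn (hp1 : ‖p‖ < 1) {R : ℝ} {N : ℕ}
    (hRN : R * ‖p‖ ^ N ≤ 1 / 2) :
    DifferentiableOn ℂ (tlog p N) (ball (0 : ℂ) R) := by
  apply differentiableOn_tsum_of_summable_norm (summable_u hp1 (3 / 4))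
    (fun i => ?_) isOpen_ball (fun i w hw => log_norm_le hp1 hRN hw i)
  intro z hz
  apply DifferentiableAt.differentiableWithinAt
  apply DifferentiableAt.clog
  · exact (differentiableAt_const _).sub (differentiableAt_id.mul_const _)
  · exact factor_mem_slitPlane (norm_factor_le_half hp1 hRN hz i)

lemma tail_hasProd (hp1 : ‖p‖ < 1) {R : ℝ} {N : ℕ}
    (hRN : R * ‖p‖ ^ N ≤ 1 / 2) {z : ℂ} (hz : z ∈ ball (0 : ℂ) R) :
    HasProd (fun j : ℕ => 1 - z * p ^ (j + N)) (Complex.exp (tlog p N z)) := by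
  have hs : HasSum (fun j : ℕ => Complex.log (1 - z * p ^ (j + N))) (tlog p N z) :=
    (summable_log hp1 hRN hz).hasSum
  have h := hs.cexp
  have he : (cexp ∘ fun j : ℕ => Complex.log (1 - z * p ^ (j + N)))
      = fun j : ℕ => 1 - z * p ^ (j + N) := by
    funext j
    exact Complex.exp_log (factor_ne_zero (norm_factor_le_half hp1 hRN hz j))
  rwa [he] at h

lemma poch_eq (hp1 : ‖p‖ < 1) {R : ℝ} {N : ℕ}
    (hRN : R * ‖p‖ ^ N ≤ 1 / 2) {z : ℂ} (hz : z ∈ ball (0 : ℂ) R) :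
    poch p z = (∏ i ∈ Finset.range N, (1 - z * p ^ i)) * Complex.exp (tlog p N z) := by
  have h1 := (tail_hasProd hp1 hRN hz).tprod_eq
  have h2 := Multipliable.prod_mul_tprod_nat_mul' (f := fun j : ℕ => 1 - z * p ^ j) (k := N)
    (tail_hasProd hp1 hRN hz).multipliable
  rw [poch, ← h2, h1]

lemma exists_N (hp0 : p ≠ 0) (hp1 : ‖p‖ < 1) (R : ℝ) (n₀ : ℕ) :
    ∃ N : ℕ, n₀ < N ∧ R * ‖p‖ ^ N ≤ 1 / 2 := by
  have hq0 : (0 : ℝ) < ‖p‖ := norm_pos_iff.mpr hp0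
  have hq1 : (0 : ℝ) ≤ ‖p‖ := hq0.le
  obtain ⟨N₁, hN₁⟩ := exists_pow_lt_of_lt_one
    (show (0:ℝ) < (1/2) / (|R| + 1) by positivity) hp1
  refine ⟨max N₁ n₀ + 1, by omega, ?_⟩
  have h1 : ‖p‖ ^ (max N₁ n₀ + 1) ≤ ‖p‖ ^ N₁ :=
    pow_le_pow_of_le_one hq1 hp1.le (by omega)
  have hR : R ≤ |R| + 1 := by
    have := le_abs_self R; linarith
  calc R * ‖p‖ ^ (max N₁ n₀ + 1)
      ≤ (|R| + 1) * ‖p‖ ^ N₁ := by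
        apply mul_le_mul hR h1 (by positivity) (by positivity)
    _ ≤ (|R| + 1) * ((1/2) / (|R| + 1)) := by
        apply mul_le_mul_of_nonneg_left hN₁.le (by positivity)
    _ = 1 / 2 := by field_simp

lemma analyticAt_tail_exp (hp1 : ‖p‖ < 1) {R : ℝ} {N : ℕ}
    (hRN : R * ‖p‖ ^ N ≤ 1 / 2) {z : ℂ} (hz : z ∈ ball (0 : ℂ) R) :
    AnalyticAt ℂ (fun w => Complex.exp (tlog p N w)) z :=
  ((tlog_diffOn hp1 hRN).cexp.analyticAt (isOpen_ball.mem_nhds hz))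

lemma poch_analyticAt (hp0 : p ≠ 0) (hp1 : ‖p‖ < 1) (z : ℂ) :
    AnalyticAt ℂ (poch p) z := by
  obtain ⟨N, -, hRN⟩ := exists_N hp0 hp1 (‖z‖ + 1) 0
  have hz : z ∈ ball (0 : ℂ) (‖z‖ + 1) := mem_ball_zero_iff.mpr (by linarith)
  have hA : AnalyticAt ℂ
      (fun w => (∏ i ∈ Finset.range N, (1 - w * p ^ i)) * Complex.exp (tlog p N w)) z := by
    apply AnalyticAt.mul
    · apply Finset.analyticAt_fun_prod
      intro i _
      exact analyticAt_const.sub ((analyticAt_id.mul analyticAt_const))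
    · exact analyticAt_tail_exp hp1 hRN hz
  apply hA.congr
  filter_upwards [isOpen_ball.mem_nhds hz] with w hw
  exact (poch_eq hp1 hRN hw).symm

lemma poch_eq_zero_iff (hp0 : p ≠ 0) (hp1 : ‖p‖ < 1) (z : ℂ) :
    poch p z = 0 ↔ ∃ j : ℕ, z * p ^ j = 1 := by
  constructor
  · intro h
    obtain ⟨N, -, hRN⟩ := exists_N hp0 hp1 (‖z‖ + 1) 0
    have hz : z ∈ ball (0 : ℂ) (‖z‖ + 1) := mem_ball_zero_iff.mpr (by linarith)
    rw [poch_eq hp1 hRN hz, mul_eq_zero] at h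
    rcases h with h | h
    · rw [Finset.prod_eq_zero_iff] at h
      obtain ⟨i, -, hi⟩ := h
      exact ⟨i, by linear_combination -hi⟩
    · exact absurd h (Complex.exp_ne_zero _)
  · rintro ⟨j, hj⟩
    obtain ⟨N, hjN, hRN⟩ := exists_N hp0 hp1 (‖z‖ + 1) j
    have hz : z ∈ ball (0 : ℂ) (‖z‖ + 1) := mem_ball_zero_iff.mpr (by linarith)
    rw [poch_eq hp1 hRN hz]
    apply mul_eq_zero_of_left
    apply Finset.prod_eq_zero (Finset.mem_range.mpr hjN)
    linear_combination -hj

lemma zpow_eq_one_iff (hp0 : p ≠ 0) (hp1 : ‖p‖ < 1) {m : ℤ} :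
    p ^ m = 1 ↔ m = 0 := by
  constructor
  · intro h
    have h1 : ‖p‖ ^ m = 1 := by
      rw [← norm_zpow, h, norm_one]
    have hq0 : (0 : ℝ) < ‖p‖ := norm_pos_iff.mpr hp0
    have hne : ‖p‖ ≠ 1 := ne_of_lt hp1
    exact zpow_right_injective₀ hq0 hne
      (show ‖p‖ ^ m = ‖p‖ ^ (0 : ℤ) by simpa using h1)
  · rintro rfl; simp

lemma one_sub_zpow_ne (hp0 : p ≠ 0) (hp1 : ‖p‖ < 1) {m : ℤ} (hm : m ≠ 0) :
    1 - p ^ m ≠ 0 := by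
  intro h
  exact hm ((zpow_eq_one_iff hp0 hp1).mp (by linear_combination -h))

end ThetaAux

open ThetaAux in
/-- For `0 < |p| < 1`, the theta function `θ(·;p)` is analytic on `ℂ ∖ {0}`, vanishes
exactly at the points `pⁿ` for `n ∈ ℤ`, and each of these zeros is simple. -/
theorem theta_zeros_simple
    (p : ℂ) (hp0 : p ≠ 0) (hp1 : ‖p‖ < 1) :
    (∀ z : ℂ, z ≠ 0 → AnalyticAt ℂ (theta p) z) ∧
    (∀ z : ℂ, z ≠ 0 → (theta p z = 0 ↔ ∃ n : ℤ, z = p ^ n)) ∧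
    (∀ (n : ℤ) (h : AnalyticAt ℂ (theta p) (p ^ n)), analyticOrderAt (theta p) (p ^ n) = 1) := by
  have hana : ∀ z : ℂ, z ≠ 0 → AnalyticAt ℂ (theta p) z := by
    intro z hz
    have h1 : AnalyticAt ℂ (poch p) z := poch_analyticAt hp0 hp1 z
    have hinner : AnalyticAt ℂ (fun w : ℂ => p * w⁻¹) z :=
      analyticAt_const.mul (analyticAt_id.inv hz)
    have h2 : AnalyticAt ℂ (fun w : ℂ => poch p (p * w⁻¹)) z := by
      have := AnalyticAt.comp_of_eq (poch_analyticAt hp0 hp1 (p * z⁻¹)) hinner rfl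
      simpa [Function.comp_def] using this
    exact h1.mul h2
  refine ⟨hana, ?_, ?_⟩
  · intro z hz
    rw [theta, mul_eq_zero, poch_eq_zero_iff hp0 hp1, poch_eq_zero_iff hp0 hp1]
    constructor
    · rintro (⟨j, hj⟩ | ⟨j, hj⟩)
      · refine ⟨-(j : ℤ), ?_⟩
        have : z = ((p ^ j : ℂ))⁻¹ := eq_inv_of_mul_eq_one_left hj
        rw [this, zpow_neg, zpow_natCast]
      · refine ⟨(j : ℤ) + 1, ?_⟩
        have h1 : z⁻¹ * p ^ (j + 1) = 1 := by
          rw [pow_succ]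
          linear_combination hj
        have h2 : z⁻¹ = ((p ^ (j + 1) : ℂ))⁻¹ := eq_inv_of_mul_eq_one_left h1
        have h3 : z = p ^ (j + 1) := by
          rw [← inv_inv z, h2, inv_inv]
        rw [h3, ← zpow_natCast]
        norm_num
    · rintro ⟨n, rfl⟩
      rcases le_or_gt n 0 with hn | hn
      · left
        refine ⟨(-n).toNat, ?_⟩
        rw [← zpow_natCast p, Int.toNat_of_nonneg (by omega), ← zpow_add₀ hp0]
        simp
      · right
        refine ⟨(n - 1).toNat, ?_⟩
        have ht : (((n - 1).toNat : ℤ)) = n - 1 := Int.toNat_of_nonneg (by omega)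
        calc p * (p ^ n)⁻¹ * p ^ ((n - 1).toNat)
            = p ^ (1 : ℤ) * p ^ (-n) * p ^ (((n - 1).toNat : ℤ)) := by
              rw [zpow_one, zpow_neg, zpow_natCast]
          _ = p ^ (1 + -n + (((n - 1).toNat : ℤ))) := by
              rw [← zpow_add₀ hp0, ← zpow_add₀ hp0]
          _ = 1 := by rw [show (1 : ℤ) + -n + (((n - 1).toNat : ℤ)) = 0 by omega, zpow_zero]
  · intro n h
    set z₀ : ℂ := p ^ n with hz₀def
    have hz₀ : z₀ ≠ 0 := zpow_ne_zero n hp0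
    have hw₀ : p * z₀⁻¹ = p ^ (1 - n) := by
      calc p * z₀⁻¹ = p ^ (1 : ℤ) * p ^ (-n) := by rw [hz₀def, zpow_one, zpow_neg]
        _ = p ^ (1 + -n) := (zpow_add₀ hp0 _ _).symm
        _ = p ^ (1 - n) := by rw [show (1 : ℤ) + -n = 1 - n by omega]
    -- choose parameters
    obtain ⟨N, hNk, hRN⟩ := exists_N hp0 hp1 (‖z₀‖ + 1) (-n).toNat
    obtain ⟨M, hMk, hRM⟩ := exists_N hp0 hp1 (‖p ^ (1 - n)‖ + 1) (n - 1).toNat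
    have hz₀ball : z₀ ∈ ball (0 : ℂ) (‖z₀‖ + 1) := mem_ball_zero_iff.mpr (by linarith)
    have hw₀ball : p * z₀⁻¹ ∈ ball (0 : ℂ) (‖p ^ (1 - n)‖ + 1) := by
      rw [hw₀]; exact mem_ball_zero_iff.mpr (by linarith)
    -- eventual decomposition
    have hev : ∀ᶠ z in nhds z₀, z ≠ 0 ∧ z ∈ ball (0 : ℂ) (‖z₀‖ + 1) ∧
        p * z⁻¹ ∈ ball (0 : ℂ) (‖p ^ (1 - n)‖ + 1) := by
      have e1 : ∀ᶠ z in nhds z₀, z ≠ 0 := eventually_ne_nhds hz₀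
      have e2 : ∀ᶠ z in nhds z₀, z ∈ ball (0 : ℂ) (‖z₀‖ + 1) :=
        isOpen_ball.eventually_mem hz₀ball
      have hc : ContinuousAt (fun z : ℂ => p * z⁻¹) z₀ :=
        continuousAt_const.mul (continuousAt_inv₀ hz₀)
      have e3 : ∀ᶠ z in nhds z₀, p * z⁻¹ ∈ ball (0 : ℂ) (‖p ^ (1 - n)‖ + 1) :=
        hc.eventually_mem (isOpen_ball.mem_nhds hw₀ball)
      filter_upwards [e1, e2, e3] with z h1 h2 h3
      exact ⟨h1, h2, h3⟩
    have hdecomp : ∀ᶠ z in nhds z₀, theta p z =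
        (∏ i ∈ Finset.range N, (1 - z * p ^ i)) *
        ((∏ i ∈ Finset.range M, (1 - p * z⁻¹ * p ^ i)) *
          (Complex.exp (tlog p N z) * Complex.exp (tlog p M (p * z⁻¹)))) := by
      filter_upwards [hev] with z hz
      rw [theta, poch_eq hp1 hRN hz.2.1, poch_eq hp1 hRM hz.2.2]
      ring
    -- the exponential part, analytic and nonvanishing
    set E : ℂ → ℂ := fun z => Complex.exp (tlog p N z) * Complex.exp (tlog p M (p * z⁻¹))
      with hEdef
    have hEana : AnalyticAt ℂ E z₀ := by
      apply AnalyticAt.mul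
      · exact analyticAt_tail_exp hp1 hRN hz₀ball
      · have hinner : AnalyticAt ℂ (fun w : ℂ => p * w⁻¹) z₀ :=
          analyticAt_const.mul (analyticAt_id.inv hz₀)
        have := AnalyticAt.comp_of_eq (analyticAt_tail_exp hp1 hRM hw₀ball) hinner rfl
        simpa [Function.comp_def] using this
    have hEne : E z₀ ≠ 0 := mul_ne_zero (Complex.exp_ne_zero _) (Complex.exp_ne_zero _)
    -- facts about factors at z₀
    have hfac1 : ∀ i : ℕ, z₀ * p ^ i = p ^ (n + (i : ℤ)) := by
      intro i
      rw [hz₀def, zpow_add₀ hp0, zpow_natCast]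
    have hfac2 : ∀ i : ℕ, p * z₀⁻¹ * p ^ i = p ^ (1 - n + (i : ℤ)) := by
      intro i
      rw [hw₀, ← zpow_natCast p i, ← zpow_add₀ hp0]
    rw [show (1 : ℕ∞) = ((1 : ℕ) : ℕ∞) by norm_num, h.analyticOrderAt_eq_natCast]
    rcases le_or_gt n 0 with hn | hn
    · -- zero comes from the first product, factor k = (-n).toNat
      set k : ℕ := (-n).toNat with hkdef
      have hk : (k : ℤ) = -n := Int.toNat_of_nonneg (by omega)
      have hkmem : k ∈ Finset.range N := Finset.mem_range.mpr hNk
      have hzk : p ^ k * z₀ = 1 := by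
        rw [← zpow_natCast p k, hk, hz₀def, ← zpow_add₀ hp0]
        simp
      refine ⟨fun z => (-(p ^ k)) * ((∏ i ∈ (Finset.range N).erase k, (1 - z * p ^ i)) *
        ((∏ i ∈ Finset.range M, (1 - p * z⁻¹ * p ^ i)) * E z)), ?_, ?_, ?_⟩
      · apply analyticAt_const.mul
        apply AnalyticAt.mul
        · exact Finset.analyticAt_fun_prod _ fun i _ =>
            analyticAt_const.sub (analyticAt_id.mul analyticAt_const)
        · apply AnalyticAt.mul _ hEana
          exact Finset.analyticAt_fun_prod _ fun i _ =>
            analyticAt_const.sub ((analyticAt_const.mul (analyticAt_id.inv hz₀)).mul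
              analyticAt_const)
      · apply mul_ne_zero (neg_ne_zero.mpr (pow_ne_zero _ hp0))
        apply mul_ne_zero
        · rw [Finset.prod_ne_zero_iff]
          intro i hi
          rw [hfac1 i]
          apply one_sub_zpow_ne hp0 hp1
          intro hcon
          apply (Finset.mem_erase.mp hi).1
          have : (i : ℤ) = (k : ℤ) := by omega
          exact_mod_cast this
        · apply mul_ne_zero _ hEne
          rw [Finset.prod_ne_zero_iff]
          intro i hi
          rw [hfac2 i]
          apply one_sub_zpow_ne hp0 hp1
          omega
      · filter_upwards [hdecomp] with z hz
        simp only [hEdef, smul_eq_mul, pow_one]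
        rw [hz, ← Finset.mul_prod_erase _ _ hkmem]
        linear_combination (-(∏ x ∈ (Finset.range N).erase k, (1 - z * p ^ x)) *
          ((∏ x ∈ Finset.range M, (1 - p * z⁻¹ * p ^ x)) *
            (Complex.exp (tlog p N z) * Complex.exp (tlog p M (p * z⁻¹))))) * hzk
    · -- zero comes from the second product, factor k = (n-1).toNat
      set k : ℕ := (n - 1).toNat with hkdef
      have hk : (k : ℤ) = n - 1 := Int.toNat_of_nonneg (by omega)
      have hkmem : k ∈ Finset.range M := Finset.mem_range.mpr hMk
      have hzk : p ^ (k + 1) = z₀ := by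
        rw [← zpow_natCast p (k + 1), hz₀def]
        congr 1
        push_cast
        omega
      refine ⟨fun z => z⁻¹ * ((∏ i ∈ Finset.range N, (1 - z * p ^ i)) *
        ((∏ i ∈ (Finset.range M).erase k, (1 - p * z⁻¹ * p ^ i)) * E z)), ?_, ?_, ?_⟩
      · apply AnalyticAt.mul (analyticAt_id.inv hz₀)
        apply AnalyticAt.mul
        · exact Finset.analyticAt_fun_prod _ fun i _ =>
            analyticAt_const.sub (analyticAt_id.mul analyticAt_const)
        · apply AnalyticAt.mul _ hEana
          exact Finset.analyticAt_fun_prod _ fun i _ =>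
            analyticAt_const.sub ((analyticAt_const.mul (analyticAt_id.inv hz₀)).mul
              analyticAt_const)
      · apply mul_ne_zero (inv_ne_zero hz₀)
        apply mul_ne_zero
        · rw [Finset.prod_ne_zero_iff]
          intro i hi
          rw [hfac1 i]
          apply one_sub_zpow_ne hp0 hp1
          omega
        · apply mul_ne_zero _ hEne
          rw [Finset.prod_ne_zero_iff]
          intro i hi
          rw [hfac2 i]
          apply one_sub_zpow_ne hp0 hp1
          intro hcon
          apply (Finset.mem_erase.mp hi).1
          have : (i : ℤ) = (k : ℤ) := by omega
          exact_mod_cast this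
      · filter_upwards [hdecomp, hev] with z hz hz'
        have hzne : z ≠ 0 := hz'.1
        have hzinv : z * z⁻¹ = 1 := mul_inv_cancel₀ hzne
        have hp1' : p * p ^ k = z₀ := by
          rw [← pow_succ']
          exact hzk
        simp only [hEdef, smul_eq_mul, pow_one]
        rw [hz, ← Finset.mul_prod_erase _ _ hkmem]
        linear_combination (-((∏ x ∈ Finset.range N, (1 - z * p ^ x)) *
            ((∏ x ∈ (Finset.range M).erase k, (1 - p * z⁻¹ * p ^ x)) *
              (Complex.exp (tlog p N z) * Complex.exp (tlog p M (p * z⁻¹)))))) * hzinv +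
          (-((∏ x ∈ Finset.range N, (1 - z * p ^ x)) *
            ((∏ x ∈ (Finset.range M).erase k, (1 - p * z⁻¹ * p ^ x)) *
              (Complex.exp (tlog p N z) * Complex.exp (tlog p M (p * z⁻¹))))) * z⁻¹) * hp1'
end

section
/- Let p, r ∈ ℂ∖{0} with |p| < 1, |r| ≠ 1, and p^ℤ ∩ r^ℤ = {1}. Let f : ℂ → ℂ be meromorphic on ℂ∖{0} and suppose f(p·z) = f(z) and f(r·z) = f(z) for all z outside some discrete subset of ℂ∖{0}. Then f is constant off a discrete set: there exist c ∈ ℂ and a discrete subset Σ of ℂ∖{0} such that f(z) = c for all z ∈ (ℂ∖{0})∖Σ. (This expresses that the field of σ-constants of the difference field of p-elliptic meromorphic functions with σ(f)(z) = f(rz) is ℂ.) -/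
/-- `S` is a discrete subset of `ℂ ∖ {0}`: it avoids `0` and each of its points is
isolated in `S`. -/
def DiscreteIn (S : Set ℂ) : Prop :=
  S ⊆ {z : ℂ | z ≠ 0} ∧ ∀ z ∈ S, ∃ ε > 0, ∀ w ∈ S, w ≠ z → ε ≤ dist w z

/-- A set of complex numbers all of whose points are uniformly isolated is countable. -/
lemma countable_of_sep {S : Set ℂ}
    (h : ∀ z ∈ S, ∃ ε > 0, ∀ w ∈ S, w ≠ z → ε ≤ dist w z) : S.Countable := by
  rw [← Set.countable_coe_iff]
  have hd : DiscreteTopology S := by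
    rw [discreteTopology_iff_isOpen_singleton]
    rintro ⟨z, hz⟩
    obtain ⟨ε, hε, hsep⟩ := h z hz
    have he : {(⟨z, hz⟩ : S)} = (Subtype.val) ⁻¹' Metric.ball z ε := by
      ext ⟨w, hw⟩
      simp only [Set.mem_singleton_iff, Set.mem_preimage, Metric.mem_ball, Subtype.mk.injEq]
      constructor
      · rintro rfl; simpa using hε
      · intro hd'
        by_contra hne
        exact absurd hd' (not_lt.mpr (hsep w hw hne))
    rw [he]
    exact Metric.isOpen_ball.preimage continuous_subtype_val
  exact TopologicalSpace.separableSpace_iff_countable.mp inferInstance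

/-- A meromorphic function on `ℂ ∖ {0}` that is both `p`-periodic and `r`-periodic
(multiplicatively, off discrete sets), where `|p| < 1`, `|r| ≠ 1` and
`p^ℤ ∩ r^ℤ = {1}`, is constant off a discrete set.  This expresses that the field of
`σ`-constants of the difference field of `p`-elliptic meromorphic functions with
`σ(f)(z) = f(rz)` is `ℂ`. -/
theorem elliptic_difference_constants
    (p r : ℂ) (hp0 : p ≠ 0) (hp1 : ‖p‖ < 1)
    (hr0 : r ≠ 0) (hr1 : ‖r‖ ≠ 1)
    (hpr : ∀ m n : ℤ, p ^ m = r ^ n → m = 0 ∧ n = 0)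
    (f : ℂ → ℂ) (hf : MeromorphicOn f {z : ℂ | z ≠ 0})
    (hfp : ∃ S : Set ℂ, DiscreteIn S ∧ ∀ z : ℂ, z ≠ 0 → z ∉ S → f (p * z) = f z)
    (hfr : ∃ S : Set ℂ, DiscreteIn S ∧ ∀ z : ℂ, z ≠ 0 → z ∉ S → f (r * z) = f z) :
    ∃ (c : ℂ) (S : Set ℂ), DiscreteIn S ∧ ∀ z : ℂ, z ≠ 0 → z ∉ S → f z = c := by
  obtain ⟨S₁, ⟨hS₁0, hS₁d⟩, hP⟩ := hfp
  obtain ⟨S₂, ⟨hS₂0, hS₂d⟩, hR⟩ := hfr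
  have hpabs : 0 < ‖p‖ := norm_pos_iff.mpr hp0
  have hS₁c : S₁.Countable := countable_of_sep hS₁d
  have hS₂c : S₂.Countable := countable_of_sep hS₂d
  set T : Set ℂ := S₁ ∪ S₂ ∪ {0} with hT
  have hTc : T.Countable := (hS₁c.union hS₂c).union (Set.countable_singleton 0)
  have hmulinj : ∀ (n k : ℤ), Function.Injective (fun z : ℂ => r ^ n * p ^ k * z) := by
    intro n k a b hab
    have hne : r ^ n * p ^ k ≠ 0 := mul_ne_zero (zpow_ne_zero _ hr0) (zpow_ne_zero _ hp0)
    exact mul_left_cancel₀ hne hab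
  set B : Set ℂ := ⋃ (n : ℤ), ⋃ (k : ℤ), (fun z : ℂ => r ^ n * p ^ k * z) ⁻¹' T with hB
  have hBc : B.Countable :=
    Set.countable_iUnion fun n => Set.countable_iUnion fun k => hTc.preimage (hmulinj n k)
  obtain ⟨t, ht⟩ : ∃ t : ℝ, (t : ℂ) ∉ B := by
    by_contra hcon
    push_neg at hcon
    have hsub : (Set.univ : Set ℝ) ⊆ (fun t : ℝ => (t : ℂ)) ⁻¹' B := fun t _ => hcon t
    exact Cardinal.not_countable_real
      (Set.Countable.mono hsub (hBc.preimage Complex.ofReal_injective))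
  set z₀ : ℂ := (t : ℂ) with hz₀def
  set W : ℤ → ℤ → ℂ := fun n k => r ^ n * p ^ k * z₀ with hW
  have horb : ∀ n k : ℤ, W n k ∉ T := by
    intro n k hmem
    exact ht (Set.mem_iUnion.mpr ⟨n, Set.mem_iUnion.mpr ⟨k, hmem⟩⟩)
  have horb0 : ∀ n k : ℤ, W n k ≠ 0 := by
    intro n k h0
    exact horb n k (by rw [h0]; exact Or.inr rfl)
  have hz₀0 : z₀ ≠ 0 := by
    have := horb0 0 0
    simpa [hW] using this
  have horbS₁ : ∀ n k : ℤ, W n k ∉ S₁ := fun n k h => horb n k (Or.inl (Or.inl h))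
  have horbS₂ : ∀ n k : ℤ, W n k ∉ S₂ := fun n k h => horb n k (Or.inl (Or.inr h))
  set a : ℂ := f z₀ with ha
  -- step identities
  have hWp : ∀ n k : ℤ, W n (k + 1) = p * W n k := by
    intro n k
    simp only [hW, zpow_add_one₀ hp0]
    ring
  have hWr : ∀ n k : ℤ, W (n + 1) k = r * W n k := by
    intro n k
    simp only [hW, zpow_add_one₀ hr0]
    ring
  have hstep_p : ∀ n k : ℤ, f (W n (k + 1)) = f (W n k) := by
    intro n k
    rw [hWp n k]
    exact hP (W n k) (horb0 n k) (horbS₁ n k)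
  have hstep_r : ∀ n k : ℤ, f (W (n + 1) k) = f (W n k) := by
    intro n k
    rw [hWr n k]
    exact hR (W n k) (horb0 n k) (horbS₂ n k)
  have hcol : ∀ n k : ℤ, f (W n k) = f (W n 0) := by
    intro n k
    induction k using Int.induction_on with
    | zero => rfl
    | succ i ih => rw [hstep_p n i]; exact ih
    | pred i ih =>
        have h2 := hstep_p n (-(i : ℤ) - 1)
        rw [show (-(i : ℤ) - 1 + 1) = -(i : ℤ) by ring] at h2
        rw [← h2]
        exact ih
  have hrow : ∀ n : ℤ, f (W n 0) = a := by
    intro n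
    induction n using Int.induction_on with
    | zero => simp [hW, ha]
    | succ i ih => rw [hstep_r i 0]; exact ih
    | pred i ih =>
        have h2 := hstep_r (-(i : ℤ) - 1) 0
        rw [show (-(i : ℤ) - 1 + 1) = -(i : ℤ) by ring] at h2
        rw [← h2]
        exact ih
  have key : ∀ n k : ℤ, f (W n k) = a := fun n k => (hcol n k).trans (hrow n)
  -- the modulus of orbit points
  have habsW : ∀ n k : ℤ,
      ‖W n k‖ = ‖r ^ n * z₀‖ * (‖p‖) ^ k := by
    intro n k
    simp only [hW, norm_mul, norm_zpow]
    ring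
  -- choose the normalizing power of p
  have hksel : ∀ n : ℕ, ∃ k : ℤ,
      ‖p‖ < ‖W n k‖ ∧ ‖W n k‖ ≤ 1 := by
    intro n
    have hx : 0 < ‖r ^ (n : ℤ) * z₀‖ :=
      norm_pos_iff.mpr (mul_ne_zero (zpow_ne_zero _ hr0) hz₀0)
    have hy : 1 < (‖p‖)⁻¹ := by
      have h1 : ‖p‖ * (‖p‖)⁻¹ = 1 := mul_inv_cancel₀ (ne_of_gt hpabs)
      nlinarith [inv_pos.mpr hpabs]
    obtain ⟨m, hm1, hm2⟩ := exists_mem_Ioc_zpow hx hy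
    refine ⟨m + 1, ?_, ?_⟩
    · rw [habsW]
      have h3 : (‖p‖)⁻¹ ^ m * (‖p‖) ^ (m + 1) <
          ‖r ^ (n : ℤ) * z₀‖ * (‖p‖) ^ (m + 1) :=
        mul_lt_mul_of_pos_right hm1 (zpow_pos hpabs _)
      calc ‖p‖
          = (‖p‖) ^ (-m + (m + 1) : ℤ) := by
            rw [show (-m + (m + 1) : ℤ) = 1 by ring, zpow_one]
        _ = (‖p‖)⁻¹ ^ m * (‖p‖) ^ (m + 1) := by
            rw [inv_zpow, ← zpow_neg, ← zpow_add₀ (ne_of_gt hpabs)]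
        _ < _ := h3
    · rw [habsW]
      have h3 : ‖r ^ (n : ℤ) * z₀‖ * (‖p‖) ^ (m + 1) ≤
          (‖p‖)⁻¹ ^ (m + 1) * (‖p‖) ^ (m + 1) :=
        mul_le_mul_of_nonneg_right hm2 (le_of_lt (zpow_pos hpabs _))
      calc ‖r ^ (n : ℤ) * z₀‖ * (‖p‖) ^ (m + 1)
          ≤ (‖p‖)⁻¹ ^ (m + 1) * (‖p‖) ^ (m + 1) := h3
        _ = (‖p‖) ^ (-(m + 1) + (m + 1) : ℤ) := by
            rw [inv_zpow, ← zpow_neg, ← zpow_add₀ (ne_of_gt hpabs)]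
        _ = 1 := by
            rw [show (-(m + 1) + (m + 1) : ℤ) = 0 by ring, zpow_zero]
  choose k hk1 hk2 using hksel
  set w : ℕ → ℂ := fun n => W n (k n) with hwdef
  -- compactness
  set K : Set ℂ := {z : ℂ | ‖p‖ ≤ ‖z‖ ∧ ‖z‖ ≤ 1} with hK
  have hKcl : IsClosed K := by
    have h1 : IsClosed {z : ℂ | ‖p‖ ≤ ‖z‖} :=
      isClosed_le continuous_const continuous_norm
    have h2 : IsClosed {z : ℂ | ‖z‖ ≤ 1} :=
      isClosed_le continuous_norm continuous_const
    exact h1.inter h2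
  have hKsub : K ⊆ Metric.closedBall 0 1 := by
    intro z hz
    simp only [Metric.mem_closedBall, Complex.dist_eq, sub_zero]
    exact hz.2
  have hKcompact : IsCompact K :=
    (isCompact_closedBall (0 : ℂ) 1).of_isClosed_subset hKcl hKsub
  have hwK : ∀ n, w n ∈ K := fun n => ⟨le_of_lt (hk1 n), hk2 n⟩
  obtain ⟨wl, hwlK, φ, hφ, hconv⟩ := hKcompact.tendsto_subseq hwK
  have hwl0 : wl ≠ 0 := by
    intro h0
    rw [h0] at hwlK
    simp only [hK, Set.mem_setOf_eq, norm_zero] at hwlK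
    exact absurd hwlK.1 (not_le.mpr hpabs)
  -- injectivity of the sequence
  have hwinj : Function.Injective w := by
    intro m n hmn
    have h1 : r ^ (m : ℤ) * p ^ (k m) = r ^ (n : ℤ) * p ^ (k n) :=
      mul_right_cancel₀ hz₀0 hmn
    have h2 : p ^ (k m - k n) = r ^ ((n : ℤ) - (m : ℤ)) := by
      rw [zpow_sub₀ hp0, zpow_sub₀ hr0,
        div_eq_div_iff (zpow_ne_zero _ hp0) (zpow_ne_zero _ hr0)]
      linear_combination h1
    obtain ⟨-, hn0⟩ := hpr _ _ h2
    have : (n : ℤ) = (m : ℤ) := by omega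
    exact_mod_cast this.symm
  -- the subsequence eventually avoids wl
  have hev : ∀ᶠ j in Filter.atTop, (w ∘ φ) j ∈ ({wl}ᶜ : Set ℂ) := by
    by_cases hex : ∃ n₀, w n₀ = wl
    · obtain ⟨n₀, hn₀⟩ := hex
      filter_upwards [Filter.eventually_gt_atTop n₀] with j hj
      simp only [Function.comp_apply, Set.mem_compl_iff, Set.mem_singleton_iff]
      intro hcon
      have hφj : φ j = n₀ := hwinj (hcon.trans hn₀.symm)
      have hle : j ≤ φ j := hφ.le_apply
      omega
    · push_neg at hex
      filter_upwards with j
      simp only [Function.comp_apply, Set.mem_compl_iff, Set.mem_singleton_iff]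
      exact hex (φ j)
  have htend : Filter.Tendsto (w ∘ φ) Filter.atTop (nhdsWithin wl {wl}ᶜ) :=
    tendsto_nhdsWithin_of_tendsto_nhds_of_eventually_within _ hconv hev
  have hfreq : ∃ᶠ z in nhdsWithin wl {wl}ᶜ, f z = a :=
    htend.frequently (Filter.Frequently.of_forall fun j => key (φ j) (k (φ j)))
  -- meromorphic dichotomy at wl
  have hmw : MeromorphicAt (fun z => f z - a) wl :=
    (hf wl hwl0).sub (MeromorphicAt.const a wl)
  have hfreq0 : ∃ᶠ z in nhdsWithin wl {wl}ᶜ, f z - a = 0 :=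
    hfreq.mono fun z hz => by rw [hz, sub_self]
  have htop : meromorphicOrderAt (fun z => f z - a) wl = ⊤ := by
    by_contra hne
    obtain ⟨m, hm⟩ := WithTop.ne_top_iff_exists.mp hne
    obtain ⟨g, hg, hg0, hfg⟩ := (meromorphicOrderAt_eq_int_iff hmw (n := m)).mp hm.symm
    have hgne : ∀ᶠ z in nhds wl, g z ≠ 0 := hg.continuousAt.eventually_ne hg0
    have hev2 : ∀ᶠ z in nhdsWithin wl {wl}ᶜ, f z - a ≠ 0 := by
      rw [eventually_nhdsWithin_iff]
      have hfg' := eventually_nhdsWithin_iff.mp hfg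
      filter_upwards [hgne, hfg'] with z hz1 hz2 hz3
      have hzne : z ≠ wl := by simpa using hz3
      have := hz2 hz3
      rw [this]
      exact smul_ne_zero (zpow_ne_zero _ (sub_ne_zero.mpr hzne)) hz1
    obtain ⟨z, hz1, hz2⟩ := (hev2.and_frequently hfreq0).exists
    exact hz1 hz2
  have hev0 : ∀ᶠ z in nhdsWithin wl {wl}ᶜ, f z = a := by
    have hh := meromorphicOrderAt_eq_top_iff.mp htop
    exact hh.mono fun z hz => sub_eq_zero.mp hz
  -- find a nearby honest point v where f is locally constant
  rw [eventually_nhdsWithin_iff] at hev0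
  obtain ⟨ε, hε, hball⟩ := Metric.eventually_nhds_iff.mp hev0
  set δ : ℝ := min (ε / 2) (‖wl‖ / 2) with hδdef
  have hwlabs : 0 < ‖wl‖ := norm_pos_iff.mpr hwl0
  have hδ : 0 < δ := lt_min (by linarith) (by linarith)
  set v : ℂ := wl + (δ : ℂ) with hvdef
  have hdistv : dist v wl = δ := by
    simp only [hvdef, Complex.dist_eq, add_sub_cancel_left, Complex.norm_real, Real.norm_eq_abs]
    exact abs_of_pos hδ
  have hvne : v ≠ wl := by
    intro h
    rw [h] at hdistv
    simp only [dist_self] at hdistv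
    exact absurd hdistv.symm (ne_of_gt hδ)
  have hv0 : v ≠ 0 := by
    intro h
    rw [h] at hdistv
    have : dist (0 : ℂ) wl = ‖wl‖ := by
      simp [Complex.dist_eq, map_sub]
    rw [this] at hdistv
    have h2 : δ ≤ ‖wl‖ / 2 := min_le_right _ _
    linarith
  have hballv : ∀ z : ℂ, dist z v < δ / 2 → f z = a := by
    intro z hz
    have h1 : dist z wl < ε := by
      have := dist_triangle z v wl
      have h2 : δ ≤ ε / 2 := min_le_left _ _
      rw [hdistv] at this
      linarith
    have h2 : z ≠ wl := by
      intro h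
      rw [h, dist_comm, hdistv] at hz
      linarith
    exact hball h1 (by simpa using h2)
  have hfv : f =ᶠ[nhds v] (fun _ => a) := by
    have hh : ∀ᶠ z in nhds v, f z = a :=
      Metric.eventually_nhds_iff.mpr ⟨δ / 2, by linarith, fun z hz => hballv z hz⟩
    exact hh
  have hvan : AnalyticAt ℂ f v :=
    analyticAt_const.congr (hfv.symm)
  have hfreqv : ∃ᶠ z in nhdsWithin v {v}ᶜ, f z = (fun _ => a) z :=
    ((hfv.filter_mono nhdsWithin_le_nhds).mono fun z hz => hz).frequently
  -- global identity theorem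
  set N : Set ℂ := {z : ℂ | z ≠ 0 ∧ ¬AnalyticAt ℂ f z} with hN
  have hNsep : ∀ z ∈ N, ∃ ε > 0, ∀ y ∈ N, y ≠ z → ε ≤ dist y z := by
    intro z hz
    have hh := (hf z hz.1).eventually_analyticAt
    rw [eventually_nhdsWithin_iff] at hh
    obtain ⟨ε', hε', hb⟩ := Metric.eventually_nhds_iff.mp hh
    exact ⟨ε', hε', fun y hy hyz =>
      le_of_not_gt fun hlt => hy.2 (hb hlt (by simpa using hyz))⟩
  have hNc : N.Countable := countable_of_sep hNsep
  set V : Set ℂ := (N ∪ {0})ᶜ with hV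
  have hVpc : IsPreconnected V := by
    have := (hNc.union (Set.countable_singleton 0)).isPathConnected_compl_of_one_lt_rank
      (by rw [Complex.rank_real_complex]; norm_num)
    exact this.isConnected.isPreconnected
  have hVan : AnalyticOnNhd ℂ f V := by
    intro z hz
    simp only [hV, Set.mem_compl_iff, Set.mem_union, Set.mem_singleton_iff, not_or] at hz
    by_contra han
    exact hz.1 ⟨hz.2, han⟩
  have hvV : v ∈ V := by
    simp only [hV, Set.mem_compl_iff, Set.mem_union, Set.mem_singleton_iff, not_or]
    exact ⟨fun h => h.2 hvan, hv0⟩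
  have heq : Set.EqOn f (fun _ => a) V :=
    hVan.eqOn_of_preconnected_of_frequently_eq analyticOnNhd_const hVpc hvV hfreqv
  refine ⟨a, N, ⟨fun z hz => hz.1, hNsep⟩, fun z hz0 hzN => ?_⟩
  have hzV : z ∈ V := by
    simp only [hV, Set.mem_compl_iff, Set.mem_union, Set.mem_singleton_iff, not_or]
    exact ⟨hzN, hz0⟩
  exact heq hzV
end
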